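/- Let (A, m) be a Noetherian local domain and I_1, I_2, ... nonzero ideals of A. Set P = ∏_n A/I_n and S = ⊕_n A/I_n. Then the short exact sequence 0 → S → P → P/S → 0 is pure exact: for every A-module L, the map S ⊗_A L → P ⊗_A L is injective. -/

import Mathlib

/-- Let `(A, m)` be a Noetherian local domain, `I₁, I₂, …` nonzero ideals, `P = ∏ₙ A/Iₙ`
and `S = ⊕ₙ A/Iₙ ⊆ P`.  Then `0 → S → P → P/S → 0` is pure exact: for every `A`-module
`L`, the map `S ⊗_A L → P ⊗_A L` is injective. -/
theorem directSum_pure_in_product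
    {A : Type u} [CommRing A] [IsDomain A] [IsNoetherianRing A] [IsLocalRing A]
    (I : ℕ → Ideal A) (hne : ∀ n, I n ≠ ⊥)
    (S : Submodule A ((n : ℕ) → A ⧸ I n))
    (hS : S = ⨆ n, LinearMap.range (LinearMap.single A (fun n => A ⧸ I n) n)) :
    ∀ (L : Type v) [AddCommGroup L] [Module A L],
      Function.Injective (LinearMap.rTensor L S.subtype) := by
  intro L _ _
  -- truncation maps
  set P := (n : ℕ) → A ⧸ I n with hP
  let trunc : ℕ → (P →ₗ[A] P) := fun N =>
    LinearMap.pi (fun n => if n < N then LinearMap.proj n else 0)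
  have trunc_apply : ∀ N (x : P) (n : ℕ), trunc N x n = if n < N then x n else 0 := by
    intro N x n
    show LinearMap.pi (fun n => if n < N then LinearMap.proj n else 0) x n = _
    rw [LinearMap.pi_apply]
    split_ifs with h <;> rfl
  have trunc_mem : ∀ N (x : P), trunc N x ∈ S := by
    intro N x
    have : trunc N x = ∑ n ∈ Finset.range N,
        (LinearMap.single A (fun n => A ⧸ I n) n) (x n) := by
      funext m
      rw [trunc_apply]
      simp only [LinearMap.coe_single]
      rw [Finset.sum_apply, eq_comm]
      rcases lt_or_ge m N with hm | hm
      · rw [if_pos hm]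
        have hs := Finset.sum_eq_single_of_mem (s := Finset.range N)
          (f := fun c => (Pi.single c (x c) : ∀ n, A ⧸ I n) m) m (Finset.mem_range.mpr hm)
          (fun b _ hb => Pi.single_eq_of_ne (M := fun n => A ⧸ I n) (Ne.symm hb) (x b))
        rw [hs]
        exact Pi.single_eq_same (M := fun n => A ⧸ I n) m (x m)
      · rw [if_neg (Nat.not_lt.mpr hm)]
        exact Finset.sum_eq_zero fun c hc => Pi.single_eq_of_ne (M := fun n => A ⧸ I n)
          (by have := Finset.mem_range.mp hc; omega) (x c)
    rw [this, hS]
    refine Submodule.sum_mem _ (fun n _ => ?_)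
    exact Submodule.mem_iSup_of_mem n (LinearMap.mem_range_self _ _)
  let q : ℕ → (P →ₗ[A] S) := fun N => LinearMap.codRestrict S (trunc N) (trunc_mem N)
  -- every element of S is fixed by large truncations
  have key : ∀ s : P, s ∈ S → ∃ N, ∀ M, N ≤ M → trunc M s = s := by
    intro s hs
    rw [hS] at hs
    refine Submodule.iSup_induction _ (motive := fun s => ∃ N, ∀ M, N ≤ M → trunc M s = s)
      hs ?_ ?_ ?_
    · rintro n x ⟨a, rfl⟩
      refine ⟨n + 1, fun M hM => ?_⟩
      funext m
      rw [trunc_apply]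
      split_ifs with h
      · rfl
      · have hmn : m ≠ n := by omega
        simp [LinearMap.coe_single, Pi.single_eq_of_ne hmn]
    · exact ⟨0, fun M _ => by simp⟩
    · rintro x y ⟨N₁, h₁⟩ ⟨N₂, h₂⟩
      refine ⟨max N₁ N₂, fun M hM => ?_⟩
      rw [map_add, h₁ M (le_trans (le_max_left _ _) hM),
        h₂ M (le_trans (le_max_right _ _) hM)]
  -- every element of S ⊗ L is fixed by rTensor of (q M ∘ subtype) for large M
  have key2 : ∀ t : TensorProduct A S L, ∃ N, ∀ M, N ≤ M →
      LinearMap.rTensor L ((q M) ∘ₗ S.subtype) t = t := by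
    intro t
    induction t using TensorProduct.induction_on with
    | zero => exact ⟨0, fun M _ => by simp⟩
    | tmul s l =>
      obtain ⟨N, hN⟩ := key s.1 s.2
      refine ⟨N, fun M hM => ?_⟩
      rw [LinearMap.rTensor_tmul]
      congr 1
      apply Subtype.ext
      exact hN M hM
    | add x y hx hy =>
      obtain ⟨N₁, h₁⟩ := hx
      obtain ⟨N₂, h₂⟩ := hy
      refine ⟨max N₁ N₂, fun M hM => ?_⟩
      rw [map_add, h₁ M (le_trans (le_max_left _ _) hM),
        h₂ M (le_trans (le_max_right _ _) hM)]
  -- conclude injectivity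
  refine (injective_iff_map_eq_zero _).mpr fun t ht => ?_
  obtain ⟨N, hN⟩ := key2 t
  have h : t = LinearMap.rTensor L ((q N) ∘ₗ S.subtype) t := (hN N le_rfl).symm
  rw [h, LinearMap.rTensor_comp, LinearMap.comp_apply, ht, map_zero]
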